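/- Let a, b, c, d form a 2×2 quantum matrix in an associative unital ℚ(q)-algebra. Then for all h, f ∈ ℕ: d^f a^h = Σ_{s=0}^{min(h,f)} (−1)^s q^{binom(s+1,2) − s(h+f−s)} (q − q^{−1})^s [h choose s]_q [f choose s]_q [s]_q! · a^{h−s} b^s c^s d^{f−s}. (Identity (4.3), equivalently the relation [D.1] of Theorem 4.6, governing two generators of F_q[M_n] in mutually diagonal position with no corner of the associated rectangle on the main diagonal.) -/

import Mathlib

set_option linter.unusedSectionVars false
set_option linter.unusedVariables false
set_option maxHeartbeats 2000000


noncomputable section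

open Finset

/-- The field `ℚ(q)` of rational functions over `ℚ`. -/
abbrev 𝕂 : Type := RatFunc ℚ

/-- The indeterminate `q`. -/
def q : 𝕂 := RatFunc.X

/-- `(n)_q = 1 + q + ⋯ + q^(n-1)`. -/
def qNum (n : ℕ) : 𝕂 := ∑ i ∈ range n, q ^ i

/-- `(n)_q! = ∏_{r=1}^n (r)_q`. -/
def qNumFac (n : ℕ) : 𝕂 := ∏ r ∈ range n, qNum (r + 1)

/-- `(n choose s)_q = (n)_q! / ((s)_q! (n-s)_q!)`. -/
def qNumBinom (n s : ℕ) : 𝕂 := qNumFac n / (qNumFac s * qNumFac (n - s))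

/-- `[n]_q = (q^n - q^(-n))/(q - q⁻¹)`. -/
def qInt (n : ℕ) : 𝕂 := (q ^ n - q⁻¹ ^ n) / (q - q⁻¹)

/-- `[n]_q! = ∏_{r=1}^n [r]_q`. -/
def qIntFac (n : ℕ) : 𝕂 := ∏ r ∈ range n, qInt (r + 1)

/-- `[n choose s]_q = [n]_q! / ([s]_q! [n-s]_q!)`. -/
def qIntBinom (n s : ℕ) : 𝕂 := qIntFac n / (qIntFac s * qIntFac (n - s))

variable {A : Type*} [Ring A] [Algebra 𝕂 A]

/-- The `q`-divided power `X^(n) = X^n / [n]_q!`. -/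
def qDiv (X : A) (n : ℕ) : A := (qIntFac n)⁻¹ • X ^ n

/-- The `q`-binomial coefficient `(X ; c choose n) = ∏_{s=1}^n (q^(c+1-s) X - 1)/(q^s - 1)`. -/
def qBin (X : A) (c : ℤ) (n : ℕ) : A :=
  (∏ s ∈ range n, (q ^ (s + 1) - 1))⁻¹ •
    ((List.range n).map (fun i => (q ^ (c - (i : ℤ)) : 𝕂) • X - 1)).prod

/-- `{X ; c choose n , r} = ∑_{s=0}^r q^(binom(s+1,2)) (r choose s)_q (X ; c+s choose n-r)`. -/
def qBrace (X : A) (c : ℤ) (n r : ℕ) : A :=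
  ∑ s ∈ range (r + 1),
    (q ^ ((s + 1).choose 2) * qNumBinom r s : 𝕂) • qBin X (c + s) (n - r)

lemma q_ne : q ≠ 0 := RatFunc.X_ne_zero

lemma q_pow_ne_one (n : ℕ) (hn : n ≠ 0) : q ^ n ≠ 1 := by
  intro hh
  have : ((Polynomial.X : Polynomial ℚ) ^ n : Polynomial ℚ) = 1 := by
    apply RatFunc.algebraMap_injective (K := ℚ)
    simpa [q, RatFunc.algebraMap_X] using hh
  have := congrArg Polynomial.natDegree this
  simp [Polynomial.natDegree_X_pow] at this
  exact hn this

lemma qq_ne : q - q⁻¹ ≠ 0 := by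
  intro hh
  have h2 : q * q = 1 := by
    have := sub_eq_zero.mp hh
    field_simp [q_ne] at this
    linear_combination this
  exact q_pow_ne_one 2 (by norm_num) (by rw [pow_two]; exact h2)

lemma qInt_zero : qInt 0 = 0 := by simp [qInt]

lemma qInt_one : qInt 1 = 1 := by simp [qInt, div_self qq_ne]

lemma qInt_ne_zero (n : ℕ) (hn : n ≠ 0) : qInt n ≠ 0 := by
  unfold qInt
  apply div_ne_zero _ qq_ne
  intro hh
  have h1 : q ^ n * q ^ n = 1 := by
    have h2 := sub_eq_zero.mp hh
    nth_rewrite 2 [h2]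
    rw [inv_pow]
    exact mul_inv_cancel₀ (pow_ne_zero _ q_ne)
  have : q ^ (n + n) = 1 := by rw [pow_add]; exact h1
  exact q_pow_ne_one (n + n) (by omega) this

lemma qInt_add (m n : ℕ) :
    qInt (m + n) = q ^ (-(n:ℤ)) * qInt m + q ^ (m:ℤ) * qInt n := by
  unfold qInt
  rw [← mul_div_assoc, ← mul_div_assoc, ← add_div]
  congr 1
  have hq := q_ne
  rw [inv_pow, inv_pow, inv_pow]
  rw [show q ^ (-(n:ℤ)) = (q ^ n)⁻¹ by rw [zpow_neg, zpow_natCast],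
      show q ^ (m:ℤ) = q ^ m from zpow_natCast q m]
  field_simp
  ring

lemma qIntFac_zero : qIntFac 0 = 1 := by simp [qIntFac]

lemma qIntFac_succ (n : ℕ) : qIntFac (n + 1) = qIntFac n * qInt (n + 1) := by
  simp [qIntFac, prod_range_succ]

lemma qIntFac_ne_zero (n : ℕ) : qIntFac n ≠ 0 := by
  unfold qIntFac
  exact prod_ne_zero_iff.mpr fun i _ => qInt_ne_zero _ (by omega)

section NC
variable {A : Type*} [Ring A] [Algebra 𝕂 A]
variable (a b c d : A)
variable (hab : a * b = q • (b * a)) (hac : a * c = q • (c * a))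
    (hbd : b * d = q • (d * b)) (hcd : c * d = q • (d * c))
    (hbc : b * c = c * b)
    (had : a * d - d * a = ((q - q⁻¹ : 𝕂)) • (b * c))

-- d commutes past powers of x when x*d = q•(d*x)
lemma comm_pow (x : A) (hx : x * d = q • (d * x)) (k : ℕ) :
    d * x ^ k = ((q⁻¹) ^ k : 𝕂) • (x ^ k * d) := by
  induction k with
  | zero => simp
  | succ n ih =>
    have hdx : d * x = (q⁻¹ : 𝕂) • (x * d) := by
      rw [hx, smul_smul, inv_mul_cancel₀ q_ne, one_smul]
    calc d * x ^ (n + 1) = (d * x ^ n) * x := by rw [pow_succ, ← mul_assoc]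
      _ = ((q⁻¹) ^ n : 𝕂) • (x ^ n * (d * x)) := by rw [ih, smul_mul_assoc, mul_assoc]
      _ = ((q⁻¹) ^ (n+1) : 𝕂) • (x ^ (n+1) * d) := by
          rw [hdx, mul_smul_comm, smul_smul, pow_succ, pow_succ, mul_assoc]

include hbd hcd in
lemma d_bc_pow (s : ℕ) : d * (b ^ s * c ^ s) = ((q⁻¹) ^ s * (q⁻¹) ^ s : 𝕂) • (b ^ s * c ^ s * d) := by
  calc d * (b ^ s * c ^ s) = (d * b ^ s) * c ^ s := by rw [mul_assoc]
    _ = ((q⁻¹) ^ s : 𝕂) • (b ^ s * (d * c ^ s)) := by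
        rw [comm_pow d b hbd, smul_mul_assoc, mul_assoc]
    _ = _ := by
        rw [comm_pow d c hcd, mul_smul_comm, smul_smul, mul_assoc]

include hbc in
lemma c_b_pow (s : ℕ) : c * b ^ s = b ^ s * c := by
  induction s with
  | zero => simp
  | succ n ih => rw [pow_succ, ← mul_assoc, ih, mul_assoc, ← hbc, ← mul_assoc, ← pow_succ]
end NC

section NC2
variable {A : Type*} [Ring A] [Algebra 𝕂 A]
variable (a b c d : A)
variable (hab : a * b = q • (b * a)) (hac : a * c = q • (c * a))
    (hbd : b * d = q • (d * b)) (hcd : c * d = q • (d * c))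
    (hbc : b * c = c * b)
    (had : a * d - d * a = ((q - q⁻¹ : 𝕂)) • (b * c))

include hab hac had in
lemma d_a_pow_succ (n : ℕ) :
    d * a ^ (n + 1) = a ^ (n + 1) * d
      - (((q - q⁻¹) * (q⁻¹) ^ n * qInt (n + 1) : 𝕂)) • (a ^ n * (b * c)) := by
  have hda : d * a = a * d - ((q - q⁻¹ : 𝕂)) • (b * c) := by
    rw [← had]; noncomm_ring
  have hca : c * a = (q⁻¹ : 𝕂) • (a * c) := by
    rw [hac, smul_smul, inv_mul_cancel₀ q_ne, one_smul]
  have hba : b * a = (q⁻¹ : 𝕂) • (a * b) := by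
    rw [hab, smul_smul, inv_mul_cancel₀ q_ne, one_smul]
  have hbca : (b * c) * a = ((q⁻¹ * q⁻¹ : 𝕂)) • (a * (b * c)) := by
    calc b * c * a = b * (c * a) := by rw [mul_assoc]
      _ = (q⁻¹ : 𝕂) • ((b * a) * c) := by rw [hca, mul_smul_comm, mul_assoc]
      _ = (q⁻¹ * q⁻¹ : 𝕂) • (a * (b * c)) := by
          rw [hba, smul_mul_assoc, smul_smul, mul_assoc]
  induction n with
  | zero => simpa [qInt_one] using hda
  | succ n ih =>
    have hcoef : (q - q⁻¹ : 𝕂) + (q - q⁻¹) * (q⁻¹) ^ n * qInt (n + 1) * (q⁻¹ * q⁻¹)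
        = (q - q⁻¹) * (q⁻¹) ^ (n + 1) * qInt (n + 1 + 1) := by
      have key : qInt (n + 1 + 1) = q⁻¹ * qInt (n + 1) + q ^ (n + 1) := by
        have h2 := qInt_add (n + 1) 1
        rw [qInt_one, mul_one] at h2
        rw [h2, zpow_natCast, show (-(1:ℕ) : ℤ) = -1 by norm_num, zpow_neg_one]
      have hq := q_ne
      have hqn : q ^ n ≠ 0 := pow_ne_zero _ q_ne
      rw [key]
      have hinv : q⁻¹ ^ (n + 1) * q ^ (n + 1) = 1 := by rw [← mul_pow, inv_mul_cancel₀ hq, one_pow]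
      linear_combination -(q - q⁻¹) * hinv
    calc d * a ^ (n + 1 + 1) = (d * a ^ (n + 1)) * a := by rw [pow_succ, ← mul_assoc]
      _ = a ^ (n + 1) * (d * a)
          - ((q - q⁻¹) * (q⁻¹) ^ n * qInt (n + 1) : 𝕂) • (a ^ n * ((b * c) * a)) := by
          rw [ih]; simp only [sub_mul, smul_mul_assoc, mul_assoc]
      _ = a ^ (n + 1 + 1) * d - ((q - q⁻¹ : 𝕂)) • (a ^ (n + 1) * (b * c))
          - ((q - q⁻¹) * (q⁻¹) ^ n * qInt (n + 1) * (q⁻¹ * q⁻¹) : 𝕂) •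
              (a ^ (n + 1) * (b * c)) := by
          rw [hda, hbca]
          simp only [mul_sub, mul_smul_comm, smul_smul, ← mul_assoc, ← pow_succ]
      _ = a ^ (n + 1 + 1) * d
          - ((q - q⁻¹) * (q⁻¹) ^ (n + 1) * qInt (n + 1 + 1) : 𝕂) •
              (a ^ (n + 1) * (b * c)) := by
          rw [sub_sub, ← add_smul, hcoef]

include hab hac had in
lemma d_a_pow (n : ℕ) :
    d * a ^ n = a ^ n * d
      - (((q - q⁻¹) * (q⁻¹) ^ (n - 1) * qInt n : 𝕂)) • (a ^ (n - 1) * (b * c)) := by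
  cases n with
  | zero => simp [qInt_zero]
  | succ n => simpa using d_a_pow_succ a b c d hab hac had n

end NC2

/-- The coefficient appearing in relation [D.1]. -/
def Cc (h f s : ℕ) : 𝕂 :=
  (-1) ^ s *
      q ^ ((((s + 1).choose 2 : ℕ) : ℤ) - (s : ℤ) * ((h : ℤ) + (f : ℤ) - (s : ℤ))) *
      (q - q⁻¹) ^ s * qIntBinom h s * qIntBinom f s * qIntFac s

/-- The zero-padded coefficient. -/
def Cpad (h f s : ℕ) : 𝕂 := if s ≤ h ∧ s ≤ f then Cc h f s else 0

lemma Cc_eq (h f s : ℕ) (hs : s ≤ h) (hsf : s ≤ f) :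
    Cc h f s = (-1) ^ s * (q ^ ((s + 1).choose 2) * (q ^ (s * (h + f - s)))⁻¹) *
      (q - q⁻¹) ^ s *
      (qIntFac h * qIntFac f / (qIntFac s * qIntFac (h - s) * qIntFac (f - s))) := by
  have hcast : ((((s + 1).choose 2 : ℕ) : ℤ) - (s : ℤ) * ((h : ℤ) + (f : ℤ) - (s : ℤ)))
      = (((s + 1).choose 2 : ℕ) : ℤ) - ((s * (h + f - s) : ℕ) : ℤ) := by
    have h1 : ((h + f - s : ℕ) : ℤ) = (h : ℤ) + f - s := by omega
    push_cast [h1]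
    ring
  rw [Cc, hcast, zpow_sub₀ q_ne, zpow_natCast, zpow_natCast, qIntBinom, qIntBinom]
  rw [div_eq_mul_inv (q ^ (s + 1).choose 2)]
  have hFs := qIntFac_ne_zero s
  field_simp [qIntFac_ne_zero, q_ne]

lemma Cpad_zero (h f : ℕ) : Cpad h f 0 = 1 := by
  rw [Cpad, if_pos ⟨Nat.zero_le _, Nat.zero_le _⟩, Cc_eq h f 0 (Nat.zero_le _) (Nat.zero_le _)]
  simp [qIntFac_zero, div_self (mul_ne_zero (qIntFac_ne_zero h) (qIntFac_ne_zero f))]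

lemma choose_step (s : ℕ) : (s + 2).choose 2 = (s + 1).choose 2 + (s + 1) := by
  rw [Nat.choose_two_right, Nat.choose_two_right,
    show s + 2 - 1 = s + 1 by omega, show s + 1 - 1 = s by omega,
    show (s + 2) * (s + 1) = (s + 1) * s + 2 * (s + 1) by ring,
    Nat.add_mul_div_left _ _ (by norm_num : 0 < 2)]

lemma Crec (h f s : ℕ) :
    Cpad h (f + 1) (s + 1)
      = Cpad h f (s + 1) * ((q⁻¹) ^ (s + 1) * (q⁻¹) ^ (s + 1))
        - Cpad h f s * ((q - q⁻¹) * (q⁻¹) ^ (h - s - 1) * qInt (h - s)) := by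
  by_cases hh : s + 1 ≤ h
  · by_cases hf : s + 1 ≤ f
    · -- main case
      obtain ⟨h', rfl⟩ : ∃ h', h = h' + (s + 1) := ⟨h - (s + 1), by omega⟩
      obtain ⟨f', rfl⟩ : ∃ f', f = f' + (s + 1) := ⟨f - (s + 1), by omega⟩
      rw [Cpad, if_pos ⟨hh, by omega⟩, Cpad, if_pos ⟨hh, hf⟩, Cpad, if_pos ⟨by omega, by omega⟩,
        Cc_eq _ _ _ hh (by omega), Cc_eq _ _ _ hh hf, Cc_eq _ _ _ (by omega) (by omega)]
      have e1 : h' + (s + 1) - (s + 1) = h' := by omega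
      have e2 : f' + (s + 1) + 1 - (s + 1) = f' + 1 := by omega
      have e3 : f' + (s + 1) - (s + 1) = f' := by omega
      have e4 : h' + (s + 1) - s = h' + 1 := by omega
      have e5 : f' + (s + 1) - s = f' + 1 := by omega
      have e6 : (s + 1) * (h' + (s + 1) + (f' + (s + 1) + 1) - (s + 1)) = (s + 1) * (h' + f' + s + 2) := by rw [show h' + (s + 1) + (f' + (s + 1) + 1) - (s + 1) = h' + f' + s + 2 from by omega]
      have e7 : (s + 1) * (h' + (s + 1) + (f' + (s + 1)) - (s + 1)) = (s + 1) * (h' + f' + s + 1) := by rw [show h' + (s + 1) + (f' + (s + 1)) - (s + 1) = h' + f' + s + 1 from by omega]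
      have e8 : s * (h' + (s + 1) + (f' + (s + 1)) - s) = s * (h' + f' + s + 2) := by rw [show h' + (s + 1) + (f' + (s + 1)) - s = h' + f' + s + 2 from by omega]
      rw [e1, e2, e3, e4, e5, e6, e7, e8,
        show s + 1 + 1 = s + 2 from rfl, choose_step]
      rw [qIntFac_succ (f' + (s + 1)), qIntFac_succ h', qIntFac_succ f', qIntFac_succ s,
        show f' + (s + 1) + 1 = f' + 1 + (s + 1) by omega, qInt_add (f' + 1) (s + 1)]
      have hz1 : q ^ (-((s + 1 : ℕ) : ℤ)) = (q ^ (s + 1) : 𝕂)⁻¹ := by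
        rw [zpow_neg, zpow_natCast]
      have hz2 : q ^ (((f' + 1 : ℕ)) : ℤ) = (q ^ (f' + 1) : 𝕂) := by rw [zpow_natCast]
      rw [hz1, hz2]
      have n1 := qIntFac_ne_zero s
      have n2 := qIntFac_ne_zero h'
      have n3 := qIntFac_ne_zero f'
      have n4 := qInt_ne_zero (s + 1) (by omega)
      have n5 := qInt_ne_zero (h' + 1) (by omega)
      have n6 := qInt_ne_zero (f' + 1) (by omega)
      have hq := q_ne
      rw [show q - q⁻¹ = (q ^ 2 - 1) / q by field_simp]
      simp only [inv_pow, div_pow, Nat.add_sub_cancel]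
      field_simp
      ring
    · by_cases hsf : s ≤ f
      · -- s = f
        obtain rfl : f = s := by omega
        obtain ⟨h', rfl⟩ : ∃ h', h = h' + (f + 1) := ⟨h - (f + 1), by omega⟩
        rw [Cpad, if_pos ⟨hh, le_refl _⟩, Cpad, if_neg (by omega), Cpad,
          if_pos ⟨by omega, le_refl _⟩,
          Cc_eq _ _ _ hh (le_refl _), Cc_eq _ _ _ (by omega) (le_refl _)]
        have e1 : h' + (f + 1) - (f + 1) = h' := by omega
        have e2 : f + 1 - (f + 1) = 0 := by omega
        have e3 : f - f = 0 := by omega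
        have e4 : h' + (f + 1) - f = h' + 1 := by omega
        have e6 : (f + 1) * (h' + (f + 1) + (f + 1) - (f + 1)) = (f + 1) * (h' + f + 1) := by rw [show h' + (f + 1) + (f + 1) - (f + 1) = h' + f + 1 from by omega]
        have e8 : f * (h' + (f + 1) + f - f) = f * (h' + f + 1) := by rw [show h' + (f + 1) + f - f = h' + f + 1 from by omega]
        rw [e1, e2, e3, e4, e6, e8, show f + 1 + 1 = f + 2 from rfl, choose_step,
          qIntFac_zero, qIntFac_succ h', qIntFac_succ f]
        have n1 := qIntFac_ne_zero f
        have n2 := qIntFac_ne_zero h'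
        have n4 := qInt_ne_zero (f + 1) (by omega)
        have n5 := qInt_ne_zero (h' + 1) (by omega)
        have hq := q_ne
        rw [show q - q⁻¹ = (q ^ 2 - 1) / q by field_simp]
        simp only [inv_pow, div_pow, Nat.add_sub_cancel]
        field_simp
        ring
      · -- s > f : everything vanishes
        rw [Cpad, if_neg (by omega), Cpad, if_neg (by omega), Cpad, if_neg (by omega)]
        simp
  · -- s + 1 > h
    rw [Cpad, if_neg (by omega), Cpad, if_neg (by omega)]
    by_cases hsh : s ≤ h
    · have : h = s := by omega
      subst this
      simp [qInt_zero]
    · rw [Cpad, if_neg (by omega)]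
      simp

section NC3
variable {A : Type*} [Ring A] [Algebra 𝕂 A]
variable (a b c d : A)
variable (hab : a * b = q • (b * a)) (hac : a * c = q • (c * a))
    (hbd : b * d = q • (d * b)) (hcd : c * d = q • (d * c))
    (hbc : b * c = c * b)
    (had : a * d - d * a = ((q - q⁻¹ : 𝕂)) • (b * c))

include hab hac hbd hcd hbc had in
lemma step_term (h f s : ℕ) (hs : s ≤ f) :
    d * (a ^ (h - s) * b ^ s * c ^ s * d ^ (f - s)) =
      ((q⁻¹) ^ s * (q⁻¹) ^ s : 𝕂) • (a ^ (h - s) * b ^ s * c ^ s * d ^ (f + 1 - s))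
      - ((q - q⁻¹) * (q⁻¹) ^ (h - s - 1) * qInt (h - s) : 𝕂) •
          (a ^ (h - (s + 1)) * b ^ (s + 1) * c ^ (s + 1) * d ^ (f + 1 - (s + 1))) := by
  have h1 : f + 1 - s = (f - s) + 1 := by omega
  have h2 : f + 1 - (s + 1) = f - s := by omega
  have h3 : h - (s + 1) = h - s - 1 := by omega
  rw [h1, h2, h3]
  have hd1 : d * (b ^ s * (c ^ s * d ^ (f - s)))
      = ((q⁻¹) ^ s * (q⁻¹) ^ s : 𝕂) • (b ^ s * (c ^ s * d ^ (f - s + 1))) := by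
    calc d * (b ^ s * (c ^ s * d ^ (f - s))) = (d * (b ^ s * c ^ s)) * d ^ (f - s) := by
          rw [mul_assoc, mul_assoc]
      _ = ((q⁻¹) ^ s * (q⁻¹) ^ s : 𝕂) • (b ^ s * c ^ s * d * d ^ (f - s)) := by
          rw [d_bc_pow b c d hbd hcd s, smul_mul_assoc]
      _ = ((q⁻¹) ^ s * (q⁻¹) ^ s : 𝕂) • (b ^ s * (c ^ s * d ^ (f - s + 1))) := by
          rw [mul_assoc, mul_assoc, ← pow_succ']
  have hd2 : (b * c) * (b ^ s * (c ^ s * d ^ (f - s)))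
      = b ^ (s + 1) * (c ^ (s + 1) * d ^ (f - s)) := by
    calc (b * c) * (b ^ s * (c ^ s * d ^ (f - s)))
        = b * ((c * b ^ s) * (c ^ s * d ^ (f - s))) := by
          rw [mul_assoc, ← mul_assoc c]
      _ = b * (b ^ s * ((c * c ^ s) * d ^ (f - s))) := by
          rw [c_b_pow b c hbc, mul_assoc, ← mul_assoc c]
      _ = b ^ (s + 1) * (c ^ (s + 1) * d ^ (f - s)) := by
          rw [← pow_succ', ← mul_assoc, ← pow_succ']
  calc d * (a ^ (h - s) * b ^ s * c ^ s * d ^ (f - s))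
      = (d * a ^ (h - s)) * (b ^ s * (c ^ s * d ^ (f - s))) := by
        simp only [mul_assoc]
    _ = a ^ (h - s) * (d * (b ^ s * (c ^ s * d ^ (f - s))))
        - ((q - q⁻¹) * (q⁻¹) ^ (h - s - 1) * qInt (h - s) : 𝕂) •
            (a ^ (h - s - 1) * ((b * c) * (b ^ s * (c ^ s * d ^ (f - s))))) := by
        rw [d_a_pow a b c d hab hac had (h - s), sub_mul, smul_mul_assoc, mul_assoc, mul_assoc,
          mul_assoc]
    _ = ((q⁻¹) ^ s * (q⁻¹) ^ s : 𝕂) • (a ^ (h - s) * b ^ s * c ^ s * d ^ (f - s + 1))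
        - ((q - q⁻¹) * (q⁻¹) ^ (h - s - 1) * qInt (h - s) : 𝕂) •
            (a ^ (h - s - 1) * b ^ (s + 1) * c ^ (s + 1) * d ^ (f - s)) := by
        rw [hd1, hd2, mul_smul_comm]
        simp only [mul_assoc]

include hab hac hbd hcd hbc had in
lemma main_sum (h f : ℕ) : d ^ f * a ^ h =
    ∑ s ∈ range (f + 1), Cpad h f s • (a ^ (h - s) * b ^ s * c ^ s * d ^ (f - s)) := by
  induction f with
  | zero => simp [Cpad_zero]
  | succ f ih =>
    have hstep : d ^ (f + 1) * a ^ h = d * (d ^ f * a ^ h) := by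
      rw [pow_succ', mul_assoc]
    rw [hstep, ih, Finset.mul_sum]
    have hterm : ∀ s ∈ range (f + 1),
        d * (Cpad h f s • (a ^ (h - s) * b ^ s * c ^ s * d ^ (f - s)))
        = (Cpad h f s * ((q⁻¹) ^ s * (q⁻¹) ^ s)) • (a ^ (h - s) * b ^ s * c ^ s * d ^ (f + 1 - s))
          - (Cpad h f s * ((q - q⁻¹) * (q⁻¹) ^ (h - s - 1) * qInt (h - s))) •
              (a ^ (h - (s + 1)) * b ^ (s + 1) * c ^ (s + 1) * d ^ (f + 1 - (s + 1))) := by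
      intro s hsmem
      rw [mul_smul_comm, step_term a b c d hab hac hbd hcd hbc had h f s
        (Nat.lt_succ_iff.mp (mem_range.mp hsmem)), smul_sub, smul_smul, smul_smul]
    rw [Finset.sum_congr rfl hterm, Finset.sum_sub_distrib]
    have hz : (Cpad h f (f + 1) * ((q⁻¹) ^ (f + 1) * (q⁻¹) ^ (f + 1))) •
        (a ^ (h - (f + 1)) * b ^ (f + 1) * c ^ (f + 1) * d ^ (f + 1 - (f + 1))) = 0 := by
      rw [Cpad, if_neg (by omega), zero_mul, zero_smul]
    have h1 : ∑ s ∈ range (f + 1), (Cpad h f s * ((q⁻¹) ^ s * (q⁻¹) ^ s)) •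
          (a ^ (h - s) * b ^ s * c ^ s * d ^ (f + 1 - s))
        = (∑ s ∈ range (f + 1), (Cpad h f (s + 1) * ((q⁻¹) ^ (s + 1) * (q⁻¹) ^ (s + 1))) •
            (a ^ (h - (s + 1)) * b ^ (s + 1) * c ^ (s + 1) * d ^ (f + 1 - (s + 1))))
          + (Cpad h f 0 * ((q⁻¹) ^ 0 * (q⁻¹) ^ 0)) •
              (a ^ (h - 0) * b ^ 0 * c ^ 0 * d ^ (f + 1 - 0)) := by
      rw [← Finset.sum_range_succ' (fun s => (Cpad h f s * ((q⁻¹) ^ s * (q⁻¹) ^ s)) •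
            (a ^ (h - s) * b ^ s * c ^ s * d ^ (f + 1 - s))) (f + 1),
          Finset.sum_range_succ (fun s => (Cpad h f s * ((q⁻¹) ^ s * (q⁻¹) ^ s)) •
            (a ^ (h - s) * b ^ s * c ^ s * d ^ (f + 1 - s))) (f + 1), hz, add_zero]
    rw [h1, Finset.sum_range_succ' (fun s => Cpad h (f + 1) s •
          (a ^ (h - s) * b ^ s * c ^ s * d ^ (f + 1 - s))) (f + 1)]
    have h2 : ∀ s ∈ range (f + 1),
        (Cpad h f (s + 1) * ((q⁻¹) ^ (s + 1) * (q⁻¹) ^ (s + 1))) •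
            (a ^ (h - (s + 1)) * b ^ (s + 1) * c ^ (s + 1) * d ^ (f + 1 - (s + 1)))
          - (Cpad h f s * ((q - q⁻¹) * (q⁻¹) ^ (h - s - 1) * qInt (h - s))) •
              (a ^ (h - (s + 1)) * b ^ (s + 1) * c ^ (s + 1) * d ^ (f + 1 - (s + 1)))
        = Cpad h (f + 1) (s + 1) •
            (a ^ (h - (s + 1)) * b ^ (s + 1) * c ^ (s + 1) * d ^ (f + 1 - (s + 1))) := by
      intro s _
      rw [← sub_smul, ← Crec]
    have h3 : (Cpad h f 0 * ((q⁻¹) ^ 0 * (q⁻¹) ^ 0)) •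
          (a ^ (h - 0) * b ^ 0 * c ^ 0 * d ^ (f + 1 - 0))
        = Cpad h (f + 1) 0 • (a ^ (h - 0) * b ^ 0 * c ^ 0 * d ^ (f + 1 - 0)) := by
      simp [Cpad_zero]
    calc (∑ s ∈ range (f + 1), (Cpad h f (s + 1) * ((q⁻¹) ^ (s + 1) * (q⁻¹) ^ (s + 1))) •
            (a ^ (h - (s + 1)) * b ^ (s + 1) * c ^ (s + 1) * d ^ (f + 1 - (s + 1)))
          + (Cpad h f 0 * ((q⁻¹) ^ 0 * (q⁻¹) ^ 0)) •
              (a ^ (h - 0) * b ^ 0 * c ^ 0 * d ^ (f + 1 - 0)))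
        - ∑ s ∈ range (f + 1),
            (Cpad h f s * ((q - q⁻¹) * (q⁻¹) ^ (h - s - 1) * qInt (h - s))) •
              (a ^ (h - (s + 1)) * b ^ (s + 1) * c ^ (s + 1) * d ^ (f + 1 - (s + 1)))
        = (∑ s ∈ range (f + 1),
            ((Cpad h f (s + 1) * ((q⁻¹) ^ (s + 1) * (q⁻¹) ^ (s + 1))) •
              (a ^ (h - (s + 1)) * b ^ (s + 1) * c ^ (s + 1) * d ^ (f + 1 - (s + 1)))
            - (Cpad h f s * ((q - q⁻¹) * (q⁻¹) ^ (h - s - 1) * qInt (h - s))) •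
              (a ^ (h - (s + 1)) * b ^ (s + 1) * c ^ (s + 1) * d ^ (f + 1 - (s + 1)))))
          + (Cpad h f 0 * ((q⁻¹) ^ 0 * (q⁻¹) ^ 0)) •
              (a ^ (h - 0) * b ^ 0 * c ^ 0 * d ^ (f + 1 - 0)) := by
          rw [add_sub_right_comm, ← Finset.sum_sub_distrib]
      _ = (∑ s ∈ range (f + 1), Cpad h (f + 1) (s + 1) •
            (a ^ (h - (s + 1)) * b ^ (s + 1) * c ^ (s + 1) * d ^ (f + 1 - (s + 1))))
          + Cpad h (f + 1) 0 • (a ^ (h - 0) * b ^ 0 * c ^ 0 * d ^ (f + 1 - 0)) := by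
          rw [Finset.sum_congr rfl h2, h3]
end NC3


/-- **Identity (4.3) = relation [D.1] of Theorem 4.6** for a `2×2` quantum matrix. -/
theorem relation_D1 {A : Type*} [Ring A] [Algebra 𝕂 A]
    (a b c d : A)
    (hab : a * b = q • (b * a)) (hac : a * c = q • (c * a))
    (hbd : b * d = q • (d * b)) (hcd : c * d = q • (d * c))
    (hbc : b * c = c * b)
    (had : a * d - d * a = ((q - q⁻¹ : 𝕂)) • (b * c))
    (h f : ℕ) :
    d ^ f * a ^ h =
      ∑ s ∈ range (min h f + 1),
        ((-1) ^ s *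
            q ^ ((((s + 1).choose 2 : ℕ) : ℤ) - (s : ℤ) * ((h : ℤ) + (f : ℤ) - (s : ℤ))) *
            (q - q⁻¹) ^ s * qIntBinom h s * qIntBinom f s * qIntFac s : 𝕂) •
          (a ^ (h - s) * b ^ s * c ^ s * d ^ (f - s)) := by
  rw [main_sum a b c d hab hac hbd hcd hbc had h f]
  rcases le_or_gt f h with hfh | hhf
  · rw [min_eq_right hfh]
    refine Finset.sum_congr rfl fun s hs => ?_
    rw [Cpad, if_pos ⟨le_trans (Nat.lt_succ_iff.mp (mem_range.mp hs)) hfh,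
      Nat.lt_succ_iff.mp (mem_range.mp hs)⟩]
    rfl
  · rw [min_eq_left hhf.le]
    have e1 : ∑ s ∈ range (f + 1), Cpad h f s • (a ^ (h - s) * b ^ s * c ^ s * d ^ (f - s))
        = ∑ s ∈ range (h + 1), Cpad h f s • (a ^ (h - s) * b ^ s * c ^ s * d ^ (f - s)) := by
      refine (Finset.sum_subset (Finset.range_subset_range.mpr (by omega)) ?_).symm
      intro x hx hnx
      simp only [mem_range] at hx hnx
      rw [Cpad, if_neg (by omega)]
      exact zero_smul _ _
    rw [e1]
    refine Finset.sum_congr rfl fun s hs => ?_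
    rw [Cpad, if_pos ⟨Nat.lt_succ_iff.mp (mem_range.mp hs), by
      have := Nat.lt_succ_iff.mp (mem_range.mp hs); omega⟩]
    rfl

end
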